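/- Let κ = (ξ,η) be a quaternionic spinor and v a paravector. Form the 2×2 quaternionic matrix M = κ·(conjugate transpose of κ̌v) + (κ̌v)·(conjugate transpose of κ), explicitly M = [[ξ v̄ η* + η' v ξ̄, −ξ v̄ ξ* + η' v η̄],[η v̄ η* − ξ' v ξ̄, −η v̄ ξ* − ξ' v η̄]]. Then pdet M = −|v|² |κ|⁴. (M is the derivative of the map φ₁(κ) = κ κ̄ᵀ from spinors to the future light cone in ℝ^{1,4}, evaluated in the direction κ̌v.) -/

import Mathlib

open Quaternion

noncomputable section

/-- The involution `q* = a + bi + cj - dk` on quaternions (Clifford reversion). -/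
def qstar (q : ℍ[ℝ]) : ℍ[ℝ] := ⟨q.re, q.imI, q.imJ, -q.imK⟩

/-- The involution `q' = a - bi - cj + dk` on quaternions. -/
def qprime (q : ℍ[ℝ]) : ℍ[ℝ] := ⟨q.re, -q.imI, -q.imJ, q.imK⟩

/-- A paravector is an element of `ℝ + ℝi + ℝj`, i.e. a quaternion with zero `k`-component. -/
def IsParavector (q : ℍ[ℝ]) : Prop := q.imK = 0

/-- The quaternion `k`. -/
def qk : ℍ[ℝ] := ⟨0, 0, 0, 1⟩

/-- A quaternionic spinor: a pair `(ξ, η) ≠ (0,0)` with `ξ * conj η` a paravector. -/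
def IsSpinor (κ : ℍ[ℝ] × ℍ[ℝ]) : Prop := κ ≠ 0 ∧ IsParavector (κ.1 * star κ.2)

/-- The bracket `{κ₁, κ₂} = ξ₁* η₂ − η₁* ξ₂`. -/
def bracket (κ₁ κ₂ : ℍ[ℝ] × ℍ[ℝ]) : ℍ[ℝ] := qstar κ₁.1 * κ₂.2 - qstar κ₁.2 * κ₂.1

/-- Right multiplication `κ x = (ξ x, η x)`. -/
def rmul (κ : ℍ[ℝ] × ℍ[ℝ]) (x : ℍ[ℝ]) : ℍ[ℝ] × ℍ[ℝ] := (κ.1 * x, κ.2 * x)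

/-- The complementary pair `κ̌ = (η', −ξ')`. -/
def qcheck (κ : ℍ[ℝ] × ℍ[ℝ]) : ℍ[ℝ] × ℍ[ℝ] := (qprime κ.2, -qprime κ.1)

/-- The real inner product on `ℍ²`: `⟨κ₁, κ₂⟩ = Re (ξ₁ ξ̄₂ + η₁ η̄₂)`. -/
def qinner (κ₁ κ₂ : ℍ[ℝ] × ℍ[ℝ]) : ℝ := (κ₁.1 * star κ₂.1 + κ₁.2 * star κ₂.2).re

/-- The squared norm `|κ|² = |ξ|² + |η|²` on `ℍ²`. -/
def qnsq (κ : ℍ[ℝ] × ℍ[ℝ]) : ℝ := Quaternion.normSq κ.1 + Quaternion.normSq κ.2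

/-- The pseudo-determinant of a 2×2 quaternionic matrix: `pdet [[a,b],[c,d]] = a* d − c* b`. -/
def pdet (A : Matrix (Fin 2) (Fin 2) ℍ[ℝ]) : ℍ[ℝ] := qstar (A 0 0) * A 1 1 - qstar (A 1 0) * A 0 1

/-- A Clifford matrix: columns are quaternionic spinors and the pseudo-determinant is 1. -/
def IsClifford (A : Matrix (Fin 2) (Fin 2) ℍ[ℝ]) : Prop :=
  IsSpinor (A 0 0, A 1 0) ∧ IsSpinor (A 0 1, A 1 1) ∧ pdet A = 1

/-- Matrix-vector action of a 2×2 quaternionic matrix on a column vector in `ℍ²`. -/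
def mact (A : Matrix (Fin 2) (Fin 2) ℍ[ℝ]) (κ : ℍ[ℝ] × ℍ[ℝ]) : ℍ[ℝ] × ℍ[ℝ] :=
  (A 0 0 * κ.1 + A 0 1 * κ.2, A 1 0 * κ.1 + A 1 1 * κ.2)

@[simp] lemma qstar_re (q : ℍ[ℝ]) : (qstar q).re = q.re := rfl
@[simp] lemma qstar_imI (q : ℍ[ℝ]) : (qstar q).imI = q.imI := rfl
@[simp] lemma qstar_imJ (q : ℍ[ℝ]) : (qstar q).imJ = q.imJ := rfl
@[simp] lemma qstar_imK (q : ℍ[ℝ]) : (qstar q).imK = -q.imK := rfl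
@[simp] lemma qprime_re (q : ℍ[ℝ]) : (qprime q).re = q.re := rfl
@[simp] lemma qprime_imI (q : ℍ[ℝ]) : (qprime q).imI = -q.imI := rfl
@[simp] lemma qprime_imJ (q : ℍ[ℝ]) : (qprime q).imJ = -q.imJ := rfl
@[simp] lemma qprime_imK (q : ℍ[ℝ]) : (qprime q).imK = q.imK := rfl

set_option maxHeartbeats 0 in
/-- For a spinor `κ = (ξ,η)` and a paravector `v`, the derivative matrix
`M = κ (κ̌v)̄ᵀ + (κ̌v) κ̄ᵀ` has pseudo-determinant `−|v|² |κ|⁴`. -/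
theorem derivative_det_miracle (ξ η v : ℍ[ℝ]) (hκ : IsSpinor (ξ, η)) (hv : IsParavector v) :
    pdet !![ξ * star v * qstar η + qprime η * v * star ξ,
            -(ξ * star v * qstar ξ) + qprime η * v * star η;
            η * star v * qstar η - qprime ξ * v * star ξ,
            -(η * star v * qstar ξ) - qprime ξ * v * star η] =
      -(((Quaternion.normSq v * (Quaternion.normSq ξ + Quaternion.normSq η) ^ 2 : ℝ)) : ℍ[ℝ]) := by
  obtain ⟨-, hp⟩ := hκ
  simp only [IsSpinor, IsParavector] at hp hv
  simp only [Quaternion.imK_mul, Quaternion.imI_star, Quaternion.imJ_star, Quaternion.imK_star,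
    Quaternion.re_star] at hp
  simp only [pdet, Matrix.cons_val', Matrix.cons_val_zero, Matrix.cons_val_one,
    Matrix.head_cons, Matrix.empty_val', Matrix.cons_val_fin_one, Matrix.head_fin_const]
  ext <;>
    simp [Quaternion.ext_iff, Quaternion.re_mul, Quaternion.imI_mul, Quaternion.imJ_mul,
      Quaternion.imK_mul, Quaternion.normSq_def', hv] <;>
    simp only [← Quaternion.coe_mul, ← Quaternion.coe_add, ← Quaternion.coe_pow,
      ← Quaternion.coe_neg, Quaternion.re_coe, Quaternion.imI_coe, Quaternion.imJ_coe,
      Quaternion.imK_coe, mul_zero, zero_mul, add_zero, zero_add, neg_zero, sub_zero] <;>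
    first
      | ring1
      | linear_combination hp
      | linear_combination -hp
      | linear_combination (4 * (v.re ^ 2 + v.imI ^ 2 + v.imJ ^ 2) * (ξ.imK * η.re + ξ.imJ * η.imI - ξ.imI * η.imJ - ξ.re * η.imK)) * hp
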